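/- Let n ≥ 1, μ > 0, let P be a real orthogonal n×n matrix, d ∈ ℝ^n, and set X = P·Diag(d)·Pᵀ and Z = P·Diag(φ_μ(d₁),…,φ_μ(d_n))·Pᵀ. Then Z is symmetric positive definite, Z is invertible, and Z − μ Z⁻¹ = X. -/

import Mathlib

open Matrix

/-- The scalar function `φ_μ(t) = (√(t² + 4μ) + t)/2`. -/
noncomputable def phiMu (μ t : ℝ) : ℝ := (Real.sqrt (t ^ 2 + 4 * μ) + t) / 2

lemma phiMu_pos {μ : ℝ} (hμ : 0 < μ) (t : ℝ) : 0 < phiMu μ t := by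
  have h1 : |t| < Real.sqrt (t ^ 2 + 4 * μ) := by
    have : |t| = Real.sqrt (t ^ 2) := by rw [Real.sqrt_sq_eq_abs]
    rw [this]
    exact Real.sqrt_lt_sqrt (sq_nonneg t) (by linarith)
  have h2 : -t ≤ |t| := neg_le_abs t
  unfold phiMu
  linarith

lemma phiMu_eq {μ : ℝ} (hμ : 0 < μ) (t : ℝ) :
    phiMu μ t * phiMu μ t - t * phiMu μ t = μ := by
  have hs : Real.sqrt (t ^ 2 + 4 * μ) * Real.sqrt (t ^ 2 + 4 * μ) = t ^ 2 + 4 * μ :=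
    Real.mul_self_sqrt (by nlinarith [sq_nonneg t])
  unfold phiMu
  nlinarith [hs]

lemma phiMu_sub {μ : ℝ} (hμ : 0 < μ) (t : ℝ) :
    phiMu μ t - μ * (phiMu μ t)⁻¹ = t := by
  have hp := phiMu_pos hμ t
  have he := phiMu_eq hμ t
  field_simp
  nlinarith

/-- for `μ > 0`, `P` orthogonal, `X = P Diag(d) Pᵀ` and
`Z = P Diag(φ_μ(d)) Pᵀ`, the matrix `Z` is symmetric positive definite, invertible,
and satisfies `Z − μ Z⁻¹ = X`. -/
theorem phi_matrix_posdef_and_equation (n : ℕ) (hn : 1 ≤ n) (μ : ℝ) (hμ : 0 < μ)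
    (P : Matrix (Fin n) (Fin n) ℝ) (hP : Pᵀ * P = 1) (d : Fin n → ℝ)
    (X Z : Matrix (Fin n) (Fin n) ℝ)
    (hX : X = P * Matrix.diagonal d * Pᵀ)
    (hZ : Z = P * Matrix.diagonal (fun i => phiMu μ (d i)) * Pᵀ) :
    Z.PosDef ∧ IsUnit Z ∧ Z - μ • Z⁻¹ = X := by
  set D : Matrix (Fin n) (Fin n) ℝ := Matrix.diagonal (fun i => phiMu μ (d i)) with hD
  have hDpos : D.PosDef := Matrix.PosDef.diagonal (fun i => phiMu_pos hμ (d i))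
  have hPPt : P * Pᵀ = 1 := mul_eq_one_comm.mp hP
  -- Pᵀ is injective on vectors
  have hPtinj : ∀ x : Fin n → ℝ, x ≠ 0 → Pᵀ *ᵥ x ≠ 0 := by
    intro x hx h0
    apply hx
    have : Pᵀᵀ *ᵥ (Pᵀ *ᵥ x) = Pᵀᵀ *ᵥ 0 := by rw [h0]
    rwa [Matrix.mulVec_mulVec, Matrix.transpose_transpose, hPPt, Matrix.one_mulVec,
      Matrix.mulVec_zero] at this
  have hZpd : Z.PosDef := by
    refine Matrix.posDef_iff_dotProduct_mulVec.mpr ⟨?_, ?_⟩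
    · show Zᴴ = Z
      have : Zᴴ = Zᵀ := by
        ext i j; simp [Matrix.conjTranspose_apply, Matrix.transpose_apply]
      rw [this, hZ, hD, Matrix.transpose_mul, Matrix.transpose_mul, Matrix.transpose_transpose,
        Matrix.diagonal_transpose, Matrix.mul_assoc]
    · intro x hx
      have key : star x ⬝ᵥ Z *ᵥ x = star (Pᵀ *ᵥ x) ⬝ᵥ D *ᵥ (Pᵀ *ᵥ x) := by
        have hstar : star (Pᵀ *ᵥ x) = Pᵀ *ᵥ x := by ext i; simp
        have hstarx : (star x : Fin n → ℝ) = x := by ext i; simp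
        rw [hstar, hstarx, hZ, Matrix.mul_assoc, ← Matrix.mulVec_mulVec,
          Matrix.dotProduct_mulVec, ← Matrix.mulVec_transpose, ← Matrix.mulVec_mulVec]
      rw [key]
      exact hDpos.dotProduct_mulVec_pos (hPtinj x hx)
  refine ⟨hZpd, hZpd.isUnit, ?_⟩
  -- inverses
  have hphi_ne : ∀ i, phiMu μ (d i) ≠ 0 := fun i => (phiMu_pos hμ (d i)).ne'
  have hZinv : Z⁻¹ = P * Matrix.diagonal (fun i => (phiMu μ (d i))⁻¹) * Pᵀ := by
    apply Matrix.inv_eq_right_inv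
    rw [hZ, hD]
    simp only [Matrix.mul_assoc]
    rw [← Matrix.mul_assoc Pᵀ P, hP, Matrix.one_mul,
      ← Matrix.mul_assoc (Matrix.diagonal _), Matrix.diagonal_mul_diagonal]
    have h1 : (fun i => phiMu μ (d i) * (phiMu μ (d i))⁻¹) = fun _ : Fin n => (1 : ℝ) := by
      funext i; exact mul_inv_cancel₀ (hphi_ne i)
    rw [h1, Matrix.diagonal_one, Matrix.one_mul, hPPt]
  rw [hZinv, hZ, hX, hD]
  rw [Matrix.mul_assoc, Matrix.mul_assoc, Matrix.mul_assoc, ← Matrix.mul_smul,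
    ← Matrix.smul_mul, ← Matrix.mul_sub, ← Matrix.sub_mul]
  congr 2
  have hsm : μ • Matrix.diagonal (fun i => (phiMu μ (d i))⁻¹)
      = Matrix.diagonal (fun i => μ * (phiMu μ (d i))⁻¹) := by
    rw [← Matrix.diagonal_smul]; congr 1
  rw [hsm, Matrix.diagonal_sub]
  have hf : (fun i => phiMu μ (d i) - μ * (phiMu μ (d i))⁻¹) = d :=
    funext fun i => phiMu_sub hμ (d i)
  rw [hf]
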